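/- arXiv:2202.05295 — 3 statements merged into one kernel-verified Lean document; each statement's English description precedes it below -/
import Mathlib

section
/- Let g(x) = Mx + b be affine on R^n with ‖M‖₂ = κ < 1, and let f(x) = x − g(x). Given iterates x_{k−m},...,x_k, let α minimize ‖Σ α_i f(x_{k−m+i})‖₂ subject to Σ α_i = 1, and let β ∈ (0,1]. Then the Anderson update x_{k+1} = (1−β) Σ α_i x_{k−m+i} + β Σ α_i g(x_{k−m+i}) satisfies ‖f(x_{k+1})‖₂ ≤ ((1−β) + κβ) ‖Σ α_i f(x_{k−m+i})‖₂ ≤ ((1−β) + κβ) ‖f(x_k)‖₂. -/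
open Finset

/-- Damped Anderson acceleration step for an affine contraction: the new residual
is bounded by `((1−β)+κβ)` times the optimized combined residual, which is itself
no larger than the last residual. -/
theorem stmt_7 (n m : ℕ) (κ : ℝ) (hκ1 : κ < 1)
    (M : EuclideanSpace ℝ (Fin n) →L[ℝ] EuclideanSpace ℝ (Fin n))
    (hM : ‖M‖ = κ)
    (b : EuclideanSpace ℝ (Fin n))
    (g : EuclideanSpace ℝ (Fin n) → EuclideanSpace ℝ (Fin n))
    (hg : ∀ x, g x = M x + b)
    (x : Fin (m + 1) → EuclideanSpace ℝ (Fin n))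
    (α : Fin (m + 1) → ℝ) (hα : (∑ i, α i) = 1)
    (hopt : ∀ α' : Fin (m + 1) → ℝ, (∑ i, α' i) = 1 →
      ‖∑ i, α i • (x i - g (x i))‖ ≤ ‖∑ i, α' i • (x i - g (x i))‖)
    (β : ℝ) (hβ0 : 0 < β) (hβ1 : β ≤ 1)
    (xnew : EuclideanSpace ℝ (Fin n))
    (hnew : xnew = (1 - β) • (∑ i, α i • x i) + β • (∑ i, α i • g (x i))) :
    ‖xnew - g xnew‖ ≤ ((1 - β) + κ * β) * ‖∑ i, α i • (x i - g (x i))‖ ∧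
    ‖∑ i, α i • (x i - g (x i))‖ ≤ ‖x (Fin.last m) - g (x (Fin.last m))‖ := by
  set r : EuclideanSpace ℝ (Fin n) := ∑ i, α i • (x i - g (x i)) with hrdef
  set s : EuclideanSpace ℝ (Fin n) := ∑ i, α i • x i with hsdef
  have hgs : (∑ i, α i • g (x i)) = M s + b := by
    simp only [hg, smul_add, Finset.sum_add_distrib, ← Finset.sum_smul, hα, one_smul,
      hsdef, map_sum, map_smul]
  have hr : r = s - (M s + b) := by
    rw [hrdef, hsdef]
    simp only [smul_sub, Finset.sum_sub_distrib, hgs, hsdef]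
  have hf : xnew - g xnew = (1 - β) • r + β • (M r) := by
    rw [hg, hnew, hgs, hr]
    simp only [map_add, map_sub, map_smul]
    module
  constructor
  · rw [hf]
    calc ‖(1 - β) • r + β • (M r)‖ ≤ ‖(1 - β) • r‖ + ‖β • (M r)‖ := norm_add_le _ _
    _ = (1 - β) * ‖r‖ + β * ‖M r‖ := by
        rw [norm_smul, norm_smul, Real.norm_eq_abs, Real.norm_eq_abs,
          abs_of_nonneg (by linarith), abs_of_nonneg hβ0.le]
    _ ≤ (1 - β) * ‖r‖ + β * (κ * ‖r‖) := by
        gcongr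
        calc ‖M r‖ ≤ ‖M‖ * ‖r‖ := M.le_opNorm r
        _ = κ * ‖r‖ := by rw [hM]
    _ = ((1 - β) + κ * β) * ‖r‖ := by ring
  · have h := hopt (fun i => if i = Fin.last m then 1 else 0) (by simp)
    simpa [ite_smul] using h
end

section
/- Suppose a nonnegative sequence r_k satisfies r_{k+1} ≤ ρ r_k + C Σ_{i=0}^m r_{k−m+i}² for all k ≥ m, where ρ ∈ (0,1) and C ≥ 0. Then there exist δ > 0 and ρ̂ ∈ (ρ, 1) such that if max{r_0,...,r_m} ≤ δ then r_k ≤ ρ̂^{k−m} max{r_0,...,r_m} for all k ≥ m; in particular r_k → 0 r-linearly. -/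
open Finset

/-- Local r-linear convergence from the perturbed linear recurrence
`r_{k+1} ≤ ρ r_k + C Σ r_{k−m+i}²`. -/
theorem stmt_17 (m : ℕ) (ρ C : ℝ) (hρ0 : 0 < ρ) (hρ1 : ρ < 1) (hC : 0 ≤ C) :
    ∃ δ > (0:ℝ), ∃ ρhat : ℝ, ρ < ρhat ∧ ρhat < 1 ∧
      ∀ r : ℕ → ℝ, (∀ k, 0 ≤ r k) →
        (∀ k ≥ m, r (k + 1) ≤ ρ * r k
          + C * ∑ i ∈ Finset.range (m + 1), (r (k - m + i)) ^ 2) →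
        (∀ i ≤ m, r i ≤ δ) →
        ∀ k ≥ m, r k ≤ ρhat ^ (k - m)
          * (Finset.range (m + 1)).sup' (Finset.nonempty_range_add_one) r := by
  set ρhat := (1 + ρ) / 2 with hρhdef
  have hρhρ : ρ < ρhat := by simp only [hρhdef]; linarith
  have hρh1 : ρhat < 1 := by simp only [hρhdef]; linarith
  have hρh0 : 0 < ρhat := lt_trans hρ0 hρhρ
  have hpowm : 0 < ρhat ^ m := pow_pos hρh0 m
  set δ : ℝ := (ρhat - ρ) * ρhat ^ m / (C * (m + 1) + 1) with hδdef
  have hδpos : 0 < δ := by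
    apply div_pos (by nlinarith)
    positivity
  refine ⟨δ, hδpos, ρhat, hρhρ, hρh1, ?_⟩
  intro r hr hrec hδr
  set M := (Finset.range (m + 1)).sup' Finset.nonempty_range_add_one r with hM
  have hMδ : M ≤ δ := Finset.sup'_le _ _ (fun i hi =>
    hδr i (by have := Finset.mem_range.mp hi; omega))
  have hM0 : 0 ≤ M := le_trans (hr 0) (Finset.le_sup' r (Finset.mem_range.mpr (by omega)))
  have e1 : (C * (m + 1) + 1) * δ = (ρhat - ρ) * ρhat ^ m := by
    rw [hδdef]; field_simp
  have hCδ : C * ((m : ℝ) + 1) * δ ≤ (ρhat - ρ) * ρhat ^ m := by nlinarith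
  have key : ∀ k, r k ≤ ρhat ^ (k - m) * M := by
    intro k
    induction k using Nat.strong_induction_on with
    | _ k ih =>
      rcases le_or_gt k m with hk | hk
      · have hk0 : k - m = 0 := by omega
        rw [hk0, pow_zero, one_mul]
        exact Finset.le_sup' r (Finset.mem_range.mpr (by omega))
      · obtain ⟨K, rfl⟩ : ∃ K, k = K + 1 := ⟨k - 1, by omega⟩
        have hKm : m ≤ K := by omega
        have hone : ρhat ≤ 1 := le_of_lt hρh1
        have hsum : ∑ i ∈ Finset.range (m + 1), (r (K - m + i)) ^ 2
            ≤ ((m : ℝ) + 1) * (ρhat ^ ((K - m) - m) * (δ * M)) := by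
          have hb : ∀ i ∈ Finset.range (m + 1),
              (r (K - m + i)) ^ 2 ≤ ρhat ^ ((K - m) - m) * (δ * M) := by
            intro i hi
            have hi' := Finset.mem_range.mp hi
            have hj : K - m + i < K + 1 := by omega
            have hb1 := ih _ hj
            have h2 : ρhat ^ ((K - m + i) - m) ≤ ρhat ^ ((K - m) - m) :=
              pow_le_pow_of_le_one (le_of_lt hρh0) hone (by omega)
            have h3 : ρhat ^ ((K - m + i) - m) ≤ 1 :=
              pow_le_one₀ (le_of_lt hρh0) hone
            have hb2 : r (K - m + i) ≤ ρhat ^ ((K - m) - m) * M :=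
              hb1.trans (mul_le_mul_of_nonneg_right h2 hM0)
            have hb3 : r (K - m + i) ≤ δ := by
              refine hb1.trans (le_trans ?_ hMδ)
              nlinarith
            calc (r (K - m + i)) ^ 2 = r (K - m + i) * r (K - m + i) := sq _
              _ ≤ (ρhat ^ ((K - m) - m) * M) * δ :=
                  mul_le_mul hb2 hb3 (hr _) (by positivity)
              _ = ρhat ^ ((K - m) - m) * (δ * M) := by ring
          calc ∑ i ∈ Finset.range (m + 1), (r (K - m + i)) ^ 2
              ≤ ∑ _i ∈ Finset.range (m + 1), ρhat ^ ((K - m) - m) * (δ * M) :=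
                Finset.sum_le_sum hb
            _ = ((m : ℝ) + 1) * (ρhat ^ ((K - m) - m) * (δ * M)) := by
                rw [Finset.sum_const, Finset.card_range, nsmul_eq_mul]; push_cast; ring
        have hrK : r K ≤ ρhat ^ (K - m) * M := ih K (by omega)
        have hexp : ρhat ^ m * ρhat ^ ((K - m) - m) ≤ ρhat ^ (K - m) := by
          rw [← pow_add]
          exact pow_le_pow_of_le_one (le_of_lt hρh0) hone (by omega)
        have step : r (K + 1) ≤ ρ * (ρhat ^ (K - m) * M)
            + (C * ((m : ℝ) + 1) * δ) * (ρhat ^ ((K - m) - m) * M) := by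
          have := hrec K hKm
          have hC1 : C * (∑ i ∈ Finset.range (m + 1), (r (K - m + i)) ^ 2)
              ≤ C * (((m : ℝ) + 1) * (ρhat ^ ((K - m) - m) * (δ * M))) :=
            mul_le_mul_of_nonneg_left hsum hC
          nlinarith [mul_le_mul_of_nonneg_left hrK (le_of_lt hρ0)]
        have step2 : r (K + 1) ≤ ρ * (ρhat ^ (K - m) * M)
            + (ρhat - ρ) * (ρhat ^ (K - m) * M) := by
          refine step.trans ?_
          have h4 : (C * ((m : ℝ) + 1) * δ) * (ρhat ^ ((K - m) - m) * M)
              ≤ ((ρhat - ρ) * ρhat ^ m) * (ρhat ^ ((K - m) - m) * M) := by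
            apply mul_le_mul_of_nonneg_right hCδ
            positivity
          have h5 : ((ρhat - ρ) * ρhat ^ m) * (ρhat ^ ((K - m) - m) * M)
              ≤ (ρhat - ρ) * (ρhat ^ (K - m) * M) := by
            have := mul_le_mul_of_nonneg_right hexp hM0
            nlinarith
          linarith
        have hKe : (K + 1) - m = (K - m) + 1 := by omega
        rw [hKe, pow_succ]
        nlinarith [step2]
  intro k hk
  exact key k
end

section
/- Let r_p ∈ R^n be nonzero, M ∈ R^{n×n} with ‖M‖₂ ≤ κ < 1, and r_q = M r_p. Then the optimized damping factor β* = ⟨r_p − r_q, r_p⟩/‖r_p − r_q‖₂² satisfies β* ≥ (1 − κ)/(1 + κ)² > 0. In particular, for a linear contraction the optimal damping factor is automatically bounded away from zero. -/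
/-- For a linear contraction the optimized damping factor is automatically
bounded away from zero: `β* ≥ (1−κ)/(1+κ)² > 0`. -/
theorem stmt_19 (n : ℕ) (κ : ℝ) (hκ1 : κ < 1)
    (M : EuclideanSpace ℝ (Fin n) →L[ℝ] EuclideanSpace ℝ (Fin n))
    (hM : ‖M‖ ≤ κ)
    (rp : EuclideanSpace ℝ (Fin n)) (hrp : rp ≠ 0)
    (rq : EuclideanSpace ℝ (Fin n)) (hrq : rq = M rp)
    (βstar : ℝ)
    (hβ : βstar = (inner ℝ (rp - rq) rp : ℝ) / ‖rp - rq‖ ^ 2) :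
    (1 - κ) / (1 + κ) ^ 2 ≤ βstar ∧ 0 < (1 - κ) / (1 + κ) ^ 2 := by
  have hκ0 : 0 ≤ κ := le_trans (norm_nonneg M) hM
  have hrpn : 0 < ‖rp‖ := norm_pos_iff.mpr hrp
  have hrq_le : ‖rq‖ ≤ κ * ‖rp‖ := by
    rw [hrq]
    exact (M.le_opNorm rp).trans (mul_le_mul_of_nonneg_right hM (norm_nonneg _))
  -- lower bound on the inner product
  have hinner : (1 - κ) * ‖rp‖ ^ 2 ≤ (inner ℝ (rp - rq) rp : ℝ) := by
    have h1 : (inner ℝ (rp - rq) rp : ℝ) = ‖rp‖ ^ 2 - inner ℝ rq rp := by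
      rw [inner_sub_left, real_inner_self_eq_norm_sq]
    have h2 : (inner ℝ rq rp : ℝ) ≤ κ * ‖rp‖ ^ 2 := by
      calc (inner ℝ rq rp : ℝ) ≤ ‖rq‖ * ‖rp‖ := real_inner_le_norm rq rp
        _ ≤ κ * ‖rp‖ * ‖rp‖ := mul_le_mul_of_nonneg_right hrq_le (norm_nonneg _)
        _ = κ * ‖rp‖ ^ 2 := by ring
    nlinarith
  have hipos : 0 < (inner ℝ (rp - rq) rp : ℝ) :=
    lt_of_lt_of_le (mul_pos (by linarith) (by positivity)) hinner
  have hdiff_le : ‖rp - rq‖ ≤ (1 + κ) * ‖rp‖ := by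
    calc ‖rp - rq‖ ≤ ‖rp‖ + ‖rq‖ := norm_sub_le _ _
      _ ≤ ‖rp‖ + κ * ‖rp‖ := by linarith
      _ = (1 + κ) * ‖rp‖ := by ring
  have hdsq : ‖rp - rq‖ ^ 2 ≤ (1 + κ) ^ 2 * ‖rp‖ ^ 2 := by
    nlinarith [norm_nonneg (rp - rq)]
  have hdpos : 0 < ‖rp - rq‖ ^ 2 := by
    rcases eq_or_ne (rp - rq) 0 with h | h
    · rw [h] at hipos; simp [inner_zero_left] at hipos
    · exact pow_pos (norm_pos_iff.mpr h) 2
  have hpos2 : (0:ℝ) < (1 + κ) ^ 2 := by positivity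
  constructor
  · rw [hβ, div_le_div_iff₀ hpos2 hdpos]
    calc (1 - κ) * ‖rp - rq‖ ^ 2 ≤ (1 - κ) * ((1 + κ) ^ 2 * ‖rp‖ ^ 2) :=
          mul_le_mul_of_nonneg_left hdsq (by linarith)
      _ = (1 - κ) * ‖rp‖ ^ 2 * (1 + κ) ^ 2 := by ring
      _ ≤ (inner ℝ (rp - rq) rp : ℝ) * (1 + κ) ^ 2 :=
          mul_le_mul_of_nonneg_right hinner (le_of_lt hpos2)
  · exact div_pos (by linarith) hpos2
end
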